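/- Suppose the Lyapunov exponents χ₁,…,χ_r of a measure-preserving ℝ^k-action with an invariant continuous pseudo-Riemannian metric g (a (0,2)-tensor) satisfy: whenever g is non-zero on a pair of Oseledets subspaces E_{χᵢ} × E_{χⱼ}, then χᵢ + χⱼ = 0. Then the Lyapunov exponents occur in pairs (χ, −χ), and g pairs the corresponding Oseledets subspaces: g(E_{χᵢ}, E_{χⱼ}) = 0 unless χᵢ = −χⱼ. -/

import Mathlib

/-- Feres–Katok pairing: if a non-degenerate invariant pseudo-Riemannian
metric `g` (a (0,2)-tensor at a point) can only be non-zero on a pair of Oseledets subspaces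
`E_{χᵢ} × E_{χⱼ}` when `χᵢ + χⱼ = 0`, then the Lyapunov exponents occur in pairs `(χ, −χ)`,
and `g` pairs the corresponding Oseledets subspaces: `g(E_{χᵢ}, E_{χⱼ}) = 0` unless
`χᵢ = −χⱼ`. -/
theorem lyapunov_exponents_paired
    {V : Type*} [AddCommGroup V] [Module ℝ V] [FiniteDimensional ℝ V]
    {ι : Type*} [Fintype ι] [DecidableEq ι]
    (χ : ι → ℝ) (hχ : Function.Injective χ)
    (Esub : ι → Submodule ℝ V)
    (hinternal : DirectSum.IsInternal Esub)
    (hnontriv : ∀ i, Esub i ≠ ⊥)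
    (g : LinearMap.BilinForm ℝ V) (hg : g.Nondegenerate)
    (hpair : ∀ i j : ι, (∃ u ∈ Esub i, ∃ v ∈ Esub j, g u v ≠ 0) → χ i + χ j = 0) :
    (∀ i : ι, ∃ j : ι, χ j = -χ i) ∧
    (∀ i j : ι, χ i ≠ -χ j → ∀ u ∈ Esub i, ∀ v ∈ Esub j, g u v = 0) := by
  have key : ∀ i j : ι, χ i + χ j ≠ 0 → ∀ u ∈ Esub i, ∀ v ∈ Esub j, g u v = 0 := by
    intro i j hne u hu v hv
    by_contra h
    exact hne (hpair i j ⟨u, hu, v, hv, h⟩)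
  constructor
  · intro i
    by_contra hno
    push_neg at hno
    obtain ⟨u, hu, hune⟩ := Submodule.exists_mem_ne_zero_of_ne_bot (hnontriv i)
    apply hune
    apply hg.1 u
    intro v
    have htop : (⨆ j, Esub j) = ⊤ := hinternal.submodule_iSup_eq_top
    have hv : v ∈ (⨆ j, Esub j) := htop ▸ Submodule.mem_top
    have hle : (⨆ j, Esub j) ≤ LinearMap.ker (g u) := by
      apply iSup_le
      intro j w hw
      have : χ i + χ j ≠ 0 := by
        intro h0
        exact hno j (by linarith)
      exact key i j this u hu w hw
    exact hle hv
  · intro i j hne u hu v hv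
    apply key i j _ u hu v hv
    intro h0
    exact hne (by linarith)
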